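/- In the linear model Y = Xβ + Zγ + ε with ε ~ N(0, σ²I), let T_J = Λ β̂_J/σ be the standardized joint-fitting statistics with Λ = diag(1/√λ_j), λ_j = ((X'(I−H)X)^{-1})_{jj}, and let T_M = C X'(I−H)Y/σ be the standardized marginal statistics with C = diag(1/√(X_j'(I−H)X_j)). Then T_M equals the innovated transformation of T_J: T_M = D Σ_{T_J}^{-1} T_J, where Σ_{T_J} = Λ(X'(I−H)X)^{-1}Λ and D = diag(1/√((Σ_{T_J}^{-1})_{jj})). -/

import Mathlib

open Matrix

noncomputable section

/-- In the linear model, the standardized marginal statistics are the innovated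
transformation of the standardized joint statistics: with
`T_J(y) = Λ(Xᵀ(I−H)X)⁻¹Xᵀ(I−H) y / σ`, `T_M(y) = C Xᵀ(I−H) y / σ`,
`Σ_{T_J} = Λ(Xᵀ(I−H)X)⁻¹Λ` and `D = diag(1/√((Σ_{T_J}⁻¹)_{jj}))`, one has
`T_M(y) = D Σ_{T_J}⁻¹ T_J(y)` for every data vector `y`. -/
theorem stmt_9 {N n m : ℕ}
    (X : Matrix (Fin N) (Fin n) ℝ) (Z : Matrix (Fin N) (Fin m) ℝ)
    (σ : ℝ) (hσ : 0 < σ)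
    (hZ : IsUnit (Zᵀ * Z).det)
    (H : Matrix (Fin N) (Fin N) ℝ) (hH : H = Z * (Zᵀ * Z)⁻¹ * Zᵀ)
    (hpd : (Xᵀ * (1 - H) * X).PosDef)
    (Λ : Matrix (Fin n) (Fin n) ℝ)
    (hΛ : Λ = Matrix.diagonal fun j => 1 / Real.sqrt ((((Xᵀ * (1 - H) * X)⁻¹ : Matrix (Fin n) (Fin n) ℝ) j j)))
    (C : Matrix (Fin n) (Fin n) ℝ)
    (hC : C = Matrix.diagonal fun j => 1 / Real.sqrt (((Xᵀ * (1 - H) * X : Matrix (Fin n) (Fin n) ℝ) j j)))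
    (TJ TM : (Fin N → ℝ) → Fin n → ℝ)
    (hTJ : ∀ y, TJ y = σ⁻¹ • ((Λ * (Xᵀ * (1 - H) * X)⁻¹ * Xᵀ * (1 - H)) *ᵥ y))
    (hTM : ∀ y, TM y = σ⁻¹ • ((C * Xᵀ * (1 - H)) *ᵥ y))
    (STJ : Matrix (Fin n) (Fin n) ℝ) (hSTJ : STJ = Λ * (Xᵀ * (1 - H) * X)⁻¹ * Λ)
    (D : Matrix (Fin n) (Fin n) ℝ)
    (hD : D = Matrix.diagonal fun j => 1 / Real.sqrt ((STJ⁻¹) j j)) :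
    ∀ y, TM y = (D * STJ⁻¹) *ᵥ TJ y := by
  intro y
  set A : Matrix (Fin n) (Fin n) ℝ := Xᵀ * (1 - H) * X with hAdef
  have hAdet : IsUnit A.det := (Matrix.isUnit_iff_isUnit_det _).1 hpd.isUnit
  have diag_pos : ∀ (M : Matrix (Fin n) (Fin n) ℝ), M.PosDef → ∀ j, 0 < M j j := by
    intro M hM j
    have hne : (Pi.single j 1 : Fin n → ℝ) ≠ 0 := by
      intro h; simpa using congrFun h j
    exact hM.diag_pos
  have hApos : ∀ j, 0 < A j j := diag_pos A hpd
  have hAipos : ∀ j, 0 < A⁻¹ j j := diag_pos A⁻¹ hpd.inv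
  have hΛinv : Λ⁻¹ = Matrix.diagonal fun j => Real.sqrt (A⁻¹ j j) := by
    apply Matrix.inv_eq_right_inv
    rw [hΛ, Matrix.diagonal_mul_diagonal]
    convert Matrix.diagonal_one with j
    have h1 : Real.sqrt (A⁻¹ j j) ≠ 0 := (Real.sqrt_pos.2 (hAipos j)).ne'
    rw [one_div, inv_mul_cancel₀ h1]
  have hΛdet : IsUnit Λ.det := by
    rw [hΛ, Matrix.det_diagonal]
    refine isUnit_iff_ne_zero.2 (Finset.prod_ne_zero_iff.2 fun j _ => ?_)
    have := Real.sqrt_pos.2 (hAipos j)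
    positivity
  have hΛΛ : Λ⁻¹ * Λ = 1 := Matrix.nonsing_inv_mul Λ hΛdet
  have hSTJinv : STJ⁻¹ = Λ⁻¹ * (A * Λ⁻¹) := by
    rw [hSTJ, Matrix.mul_inv_rev, Matrix.mul_inv_rev,
      Matrix.nonsing_inv_nonsing_inv A hAdet]
  have hDΛ : D * Λ⁻¹ = C := by
    have hent : ∀ j, (1 / Real.sqrt (STJ⁻¹ j j)) * Real.sqrt (A⁻¹ j j)
        = 1 / Real.sqrt (A j j) := by
      intro j
      have hjj : STJ⁻¹ j j = A⁻¹ j j * A j j := by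
        rw [hSTJinv, hΛinv, Matrix.diagonal_mul, Matrix.mul_diagonal,
          mul_comm (A j j), ← mul_assoc, Real.mul_self_sqrt (hAipos j).le]
      have hu := hAipos j
      have ha := hApos j
      rw [hjj, Real.sqrt_mul hu.le]
      have h1 : Real.sqrt (A⁻¹ j j) ≠ 0 := (Real.sqrt_pos.2 hu).ne'
      have h2 : Real.sqrt (A j j) ≠ 0 := (Real.sqrt_pos.2 ha).ne'
      rw [one_div, mul_inv, mul_comm (Real.sqrt (A⁻¹ j j))⁻¹, mul_assoc,
        inv_mul_cancel₀ h1, mul_one, one_div]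
    rw [hD, hΛinv, hC, Matrix.diagonal_mul_diagonal]
    exact congrArg _ (funext hent)
  have hkey : D * STJ⁻¹ * Λ * A⁻¹ = C := by
    rw [hSTJinv]
    calc D * (Λ⁻¹ * (A * Λ⁻¹)) * Λ * A⁻¹
        = D * Λ⁻¹ * (A * ((Λ⁻¹ * Λ) * A⁻¹)) := by
          simp only [Matrix.mul_assoc]
      _ = C := by
          rw [hΛΛ, one_mul, Matrix.mul_nonsing_inv A hAdet, Matrix.mul_one, hDΛ]
  have hmat : D * STJ⁻¹ * (Λ * A⁻¹ * Xᵀ * (1 - H)) = C * Xᵀ * (1 - H) := by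
    calc D * STJ⁻¹ * (Λ * A⁻¹ * Xᵀ * (1 - H))
        = (D * STJ⁻¹ * Λ * A⁻¹) * Xᵀ * (1 - H) := by
          simp only [Matrix.mul_assoc]
      _ = C * Xᵀ * (1 - H) := by rw [hkey]
  rw [hTM, hTJ, Matrix.mulVec_smul, Matrix.mulVec_mulVec, hmat]
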